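/- Let d_m denote the number of orbits of the conjugation action of the cyclic group ⟨σ⟩ on the set of cyclic permutations of m elements (σ being the standard long cycle in S_m). Then the lower bound (m−1)!/m is asymptotically sharp: the ratio d_m · m / (m−1)! tends to 1 as m → ∞. -/

import Mathlib

open scoped BigOperators

/-- Rotational equivalence on cyclic permutations of `m` elements: `α₁ ∼ α₂` iff
`α₂ = σ^{−k} α₁ σ^{k}` for some integer `k`, where `σ = finRotate m` is the standard
long cycle.  The classes are the orbits of the conjugation action of `⟨σ⟩` on the set of
`m`-cycles in `S_m`. -/
def rotSetoid (m : ℕ) :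
    Setoid {α : Equiv.Perm (Fin m) // α.IsCycle ∧ α.support.card = m} where
  r a b := ∃ k : ℤ,
    (b : Equiv.Perm (Fin m)) = (finRotate m) ^ (-k) * (a : Equiv.Perm (Fin m)) * (finRotate m) ^ k
  iseqv := by
    constructor
    · intro a; exact ⟨0, by simp⟩
    · rintro a b ⟨k, hk⟩
      exact ⟨-k, by rw [hk]; group⟩
    · rintro a b c ⟨k, hk⟩ ⟨l, hl⟩
      exact ⟨k + l, by rw [hl, hk]; group⟩

/-- The number of orbits of the conjugation action of `⟨σ⟩` on the set of cyclic
permutations of `m` elements; this is the dimension of the space `H_{m¹}`. -/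
noncomputable def cyclicOrbitCount (m : ℕ) : ℕ :=
  Nat.card (Quotient (rotSetoid m))

section CyclicOrbitAux

open Equiv Equiv.Perm Finset Fin.NatCast

variable {n : ℕ}



variable {n : ℕ}

lemma finRotate_pow_apply (k : ℕ) (x : Fin (n + 1)) :
    ((finRotate (n + 1)) ^ k) x = x + (k : Fin (n + 1)) := by
  induction k generalizing x with
  | zero => simp
  | succ k ih =>
    rw [pow_succ, Equiv.Perm.mul_apply, ih, finRotate_succ_apply]
    push_cast
    abel

lemma commute_finRotate_pow_apply {τ : Perm (Fin (n + 1))} {d : ℕ}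
    (h : Commute τ ((finRotate (n + 1)) ^ d)) (x : Fin (n + 1)) :
    τ (x + (d : Fin (n+1))) = τ x + (d : Fin (n+1)) := by
  have := Equiv.Perm.ext_iff.mp h.eq x
  simp only [Equiv.Perm.mul_apply, finRotate_pow_apply] at this
  exact this

lemma eq_pow_of_commute_finRotate {τ : Perm (Fin (n + 1))}
    (h : Commute τ (finRotate (n + 1))) :
    τ = (finRotate (n + 1)) ^ ((τ 0 : Fin (n+1)) : ℕ) := by
  have key : ∀ k : ℕ, τ (k : Fin (n+1)) = (k : Fin (n+1)) + τ 0 := by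
    intro k
    induction k with
    | zero => simp
    | succ k ih =>
      have := commute_finRotate_pow_apply (d := 1) (by simpa using h) (k : Fin (n+1))
      push_cast at this ⊢
      rw [this, ih]
      abel
  ext x
  rw [finRotate_pow_apply, Fin.cast_val_eq_self]
  have h2 : τ x = x + τ 0 := by simpa [Fin.cast_val_eq_self, add_comm] using key (x : ℕ)
  rw [h2]

lemma orderOf_finRotate' : orderOf (finRotate (n + 2)) = n + 2 := by
  rw [(isCycle_finRotate).orderOf, support_finRotate, Finset.card_univ, Fintype.card_fin]

lemma centralizer_finRotate :
    Subgroup.centralizer ({finRotate (n+2)} : Set (Perm (Fin (n+2)))) =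
      Subgroup.zpowers (finRotate (n+2)) := by
  ext τ
  rw [Subgroup.mem_centralizer_iff]
  constructor
  · intro h
    have hc : Commute τ (finRotate (n+2)) := (h _ (Set.mem_singleton _)).symm
    rw [Subgroup.mem_zpowers_iff]
    exact ⟨((τ 0 : Fin (n+2)) : ℕ), by
      rw [zpow_natCast]; exact (eq_pow_of_commute_finRotate hc).symm⟩
  · rintro ⟨k, rfl⟩ g hg
    rw [Set.mem_singleton_iff] at hg
    subst hg
    dsimp only
    exact (Commute.zpow_right (Commute.refl (finRotate (n+2))) k).eq

lemma mem_iff_isConj {α : Perm (Fin (n+2))} :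
    (α.IsCycle ∧ α.support.card = n + 2) ↔ IsConj (finRotate (n+2)) α := by
  constructor
  · rintro ⟨h1, h2⟩
    apply isConj_of_cycleType_eq
    rw [isCycle_finRotate.cycleType, h1.cycleType, h2, support_finRotate, Finset.card_univ,
      Fintype.card_fin]
  · intro h
    obtain ⟨c, hc⟩ := isConj_iff.mp h
    subst hc
    refine ⟨isCycle_finRotate.conj, ?_⟩
    rw [card_support_conj, support_finRotate, Finset.card_univ, Fintype.card_fin]

lemma card_cycles : Nat.card {α : Perm (Fin (n+2)) // α.IsCycle ∧ α.support.card = n + 2}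
    = Nat.factorial (n + 1) := by
  classical
  have e1 : {α : Perm (Fin (n+2)) // α.IsCycle ∧ α.support.card = n + 2} ≃
      (MulAction.orbit (ConjAct (Perm (Fin (n+2)))) (finRotate (n+2))) := by
    apply Equiv.subtypeEquiv (Equiv.refl _)
    intro α
    simp only [Equiv.refl_apply]
    rw [mem_iff_isConj, ConjAct.mem_orbit_conjAct]
    exact ⟨fun h => h.symm, fun h => h.symm⟩
  rw [Nat.card_congr e1]
  have e2 : MulAction.stabilizer (ConjAct (Perm (Fin (n+2)))) (finRotate (n+2)) ≃
      Subgroup.centralizer ({finRotate (n+2)} : Set (Perm (Fin (n+2)))) := by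
    refine Equiv.subtypeEquiv (ConjAct.ofConjAct.toEquiv) fun c => ?_
    rw [MulAction.mem_stabilizer_iff, ConjAct.smul_def, Subgroup.mem_centralizer_iff]
    constructor
    · intro h g hg
      rw [Set.mem_singleton_iff] at hg; subst hg
      simp only [MulEquiv.toEquiv_eq_coe, EquivLike.coe_coe]
      rw [mul_inv_eq_iff_eq_mul] at h
      rw [← h]
    · intro h
      have := h _ (Set.mem_singleton (finRotate (n+2)))
      simp only [MulEquiv.toEquiv_eq_coe, EquivLike.coe_coe] at this
      rw [mul_inv_eq_iff_eq_mul, ← this]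
  have hstab : Nat.card (MulAction.stabilizer (ConjAct (Perm (Fin (n+2)))) (finRotate (n+2)))
      = n + 2 := by
    rw [Nat.card_congr e2, centralizer_finRotate, Nat.card_zpowers, orderOf_finRotate']
  have hos := MulAction.card_orbit_mul_card_stabilizer_eq_card_group
    (ConjAct (Perm (Fin (n+2)))) (finRotate (n+2))
  rw [← Nat.card_eq_fintype_card, ← Nat.card_eq_fintype_card, ← Nat.card_eq_fintype_card,
    hstab] at hos
  have hG : Nat.card (ConjAct (Perm (Fin (n+2)))) = (n+2) * Nat.factorial (n+1) := by
    rw [Nat.card_congr ((ConjAct.ofConjAct : ConjAct (Perm (Fin (n+2))) ≃* Perm (Fin (n+2))).toEquiv),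
      Nat.card_eq_fintype_card, Fintype.card_perm, Fintype.card_fin, Nat.factorial_succ]
  rw [hG] at hos
  rw [mul_comm (n+2) _] at hos
  exact Nat.eq_of_mul_eq_mul_right (Nat.succ_pos _) hos

lemma commute_mul_apply {τ : Perm (Fin (n + 1))} {d : ℕ}
    (h : Commute τ ((finRotate (n + 1)) ^ d)) (k : ℕ) (x : Fin (n + 1)) :
    τ (x + ((k * d : ℕ) : Fin (n+1))) = τ x + ((k * d : ℕ) : Fin (n+1)) := by
  have h' : Commute τ ((finRotate (n + 1)) ^ (k * d)) := by
    rw [mul_comm, pow_mul]; exact h.pow_right k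
  exact commute_finRotate_pow_apply h' x

-- value computation: for x : Fin (n+1) and t : ℕ, (x + (t : Fin (n+1))).val = (x.val + t) % (n+1)
lemma fin_add_nat_val (x : Fin (n + 1)) (t : ℕ) :
    (x + (t : Fin (n+1))).val = (x.val + t) % (n + 1) := by
  rw [Fin.add_def, Fin.val_natCast]
  simp [Nat.add_mod]

lemma card_commute_le {d : ℕ} (hd : 0 < d) (hdvd : d ∣ (n + 1)) :
    Nat.card {τ : Perm (Fin (n+1)) // Commute τ ((finRotate (n+1)) ^ d)}
      ≤ ((n+1)/d) ^ d * Nat.factorial d := by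
  classical
  have hdle : d ≤ n + 1 := Nat.le_of_dvd (Nat.succ_pos n) hdvd
  set m := n + 1 with hm
  let embed : Fin d → Fin (n+1) := fun i => ⟨i.val, lt_of_lt_of_le i.isLt hdle⟩
  -- key : the remainder map is injective
  have keyr : ∀ τ : Perm (Fin (n+1)), Commute τ ((finRotate (n+1)) ^ d) →
      Function.Injective (fun i : Fin d => (τ (embed i)).val % d) := by
    intro τ hτ i j hij
    simp only at hij
    set a := (τ (embed i)).val with ha
    set b := (τ (embed j)).val with hb
    set k := b / d + (n+1) / d - a / d with hk
    have hA : a / d ≤ b / d + (n+1) / d :=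
      le_trans (le_of_lt (Nat.div_lt_div_of_lt_of_dvd hdvd (τ (embed i)).isLt))
        (Nat.le_add_left _ _)
    have h1 : d * (a / d) + a % d = a := Nat.div_add_mod a d
    have h2 : d * (b / d) + b % d = b := Nat.div_add_mod b d
    have h3 : (n+1) / d * d = n + 1 := Nat.div_mul_cancel hdvd
    have h1' : a / d * d + a % d = a := Nat.div_add_mod' a d
    have h2' : b / d * d + b % d = b := Nat.div_add_mod' b d
    have hA' : a / d * d ≤ b / d * d + (n+1) / d * d := by
      have := Nat.mul_le_mul_right d hA
      rwa [add_mul] at this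
    have step1 : a + k * d = b + (n + 1) := by
      rw [hk, Nat.sub_mul, add_mul]
      zify [hA']
      push_cast at h1' h2' h3 hij ⊢
      linarith [h1', h2', h3, hij]
    have step2 : τ (embed i) + ((k * d : ℕ) : Fin (n+1)) = τ (embed j) := by
      apply Fin.ext
      rw [fin_add_nat_val, ← ha, ← hb, step1, Nat.add_mod_right, Nat.mod_eq_of_lt (τ (embed j)).isLt]
    have step3 : embed i + ((k * d : ℕ) : Fin (n+1)) = embed j :=
      τ.injective (by rw [commute_mul_apply hτ, step2])
    have step4 : (i.val + k * d) % (n+1) = j.val := by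
      have := congrArg Fin.val step3
      rwa [fin_add_nat_val] at this
    apply Fin.ext
    calc i.val = i.val % d := (Nat.mod_eq_of_lt i.isLt).symm
    _ = (i.val + k * d) % d := (Nat.add_mul_mod_self_right _ _ _).symm
    _ = (i.val + k * d) % (n+1) % d := (Nat.mod_mod_of_dvd _ hdvd).symm
    _ = j.val % d := by rw [step4]
    _ = j.val := Nat.mod_eq_of_lt j.isLt
  -- the injection
  let Φ : {τ : Perm (Fin (n+1)) // Commute τ ((finRotate (n+1)) ^ d)} →
      (Fin d → Fin ((n+1)/d)) × (Fin d ↪ Fin d) := fun ⟨τ, hτ⟩ =>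
    ⟨fun i => ⟨(τ (embed i)).val / d, Nat.div_lt_div_of_lt_of_dvd hdvd (τ (embed i)).isLt⟩,
     ⟨fun i => ⟨(τ (embed i)).val % d, Nat.mod_lt _ hd⟩,
      fun i j hij => keyr τ hτ (congrArg Fin.val hij)⟩⟩
  have hΦ : Function.Injective Φ := by
    rintro ⟨τ₁, h₁⟩ ⟨τ₂, h₂⟩ h
    simp only [Φ, Prod.mk.injEq, Function.Embedding.mk.injEq] at h
    obtain ⟨hq, hr⟩ := h
    have hbase : ∀ i : Fin d, τ₁ (embed i) = τ₂ (embed i) := by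
      intro i
      have hq' := congrArg Fin.val (congrFun hq i)
      have hr' := congrArg Fin.val (congrFun (congrArg Function.Embedding.toFun hr) i)
      simp only at hq' hr'
      apply Fin.ext
      rw [← Nat.div_add_mod (τ₁ (embed i)).val d, ← Nat.div_add_mod (τ₂ (embed i)).val d, hq', hr']
    apply Subtype.ext
    apply Equiv.Perm.ext
    intro x
    have hi : x.val % d < d := Nat.mod_lt _ hd
    have hx : embed ⟨x.val % d, hi⟩ + ((x.val / d * d : ℕ) : Fin (n+1)) = x := by
      apply Fin.ext
      rw [fin_add_nat_val]
      simp only [embed]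
      rw [Nat.mod_add_div' x.val d, Nat.mod_eq_of_lt x.isLt]
    calc τ₁ x = τ₁ (embed ⟨x.val % d, hi⟩ + ((x.val / d * d : ℕ) : Fin (n+1))) := by rw [hx]
    _ = τ₁ (embed ⟨x.val % d, hi⟩) + ((x.val / d * d : ℕ) : Fin (n+1)) := commute_mul_apply h₁ _ _
    _ = τ₂ (embed ⟨x.val % d, hi⟩) + ((x.val / d * d : ℕ) : Fin (n+1)) := by rw [hbase]
    _ = τ₂ (embed ⟨x.val % d, hi⟩ + ((x.val / d * d : ℕ) : Fin (n+1))) := (commute_mul_apply h₂ _ _).symm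
    _ = τ₂ x := by rw [hx]
  calc Nat.card {τ : Perm (Fin (n+1)) // Commute τ ((finRotate (n+1)) ^ d)}
      ≤ Nat.card ((Fin d → Fin ((n+1)/d)) × (Fin d ↪ Fin d)) :=
        Nat.card_le_card_of_injective Φ hΦ
    _ = ((n+1)/d) ^ d * Nat.factorial d := by
        rw [Nat.card_eq_fintype_card, Fintype.card_prod, Fintype.card_fun,
          Fintype.card_embedding_eq]
        simp [Nat.descFactorial_self]

section
variable (n)
abbrev Scyc := {α : Perm (Fin (n+2)) // α.IsCycle ∧ α.support.card = n + 2}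
end

noncomputable def gconj (a : Scyc n) (k : ℤ) : Scyc n := by
  refine ⟨(finRotate (n+2)) ^ (-k) * (a : Perm (Fin (n+2))) * (finRotate (n+2)) ^ k, ?_, ?_⟩
  · have : (finRotate (n+2)) ^ (-k) * (a : Perm (Fin (n+2))) * (finRotate (n+2)) ^ k
        = (finRotate (n+2)) ^ (-k) * (a : Perm (Fin (n+2))) * ((finRotate (n+2)) ^ (-k))⁻¹ := by
      rw [← zpow_neg, neg_neg]
    rw [this]
    exact a.2.1.conj
  · have : (finRotate (n+2)) ^ (-k) * (a : Perm (Fin (n+2))) * (finRotate (n+2)) ^ k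
        = (finRotate (n+2)) ^ (-k) * (a : Perm (Fin (n+2))) * ((finRotate (n+2)) ^ (-k))⁻¹ := by
      rw [← zpow_neg, neg_neg]
    rw [this, card_support_conj]
    exact a.2.2

lemma gconj_rel (a : Scyc n) (k : ℤ) : (rotSetoid (n+2)).r a (gconj a k) := ⟨k, rfl⟩

lemma gconj_mod (a : Scyc n) (k : ℤ) : gconj a k = gconj a (k % (n+2 : ℤ)) := by
  apply Subtype.ext
  show _ * _ * (finRotate (n+2)) ^ k = _ * _ * (finRotate (n+2)) ^ (k % (n+2:ℤ))
  have h1 : (finRotate (n+2)) ^ k = (finRotate (n+2)) ^ (k % (n+2:ℤ)) := by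
    conv_lhs => rw [← zpow_mod_orderOf]
    rw [orderOf_finRotate']
    norm_cast
  have h2 : (finRotate (n+2)) ^ (-k) = (finRotate (n+2)) ^ (-(k % (n+2:ℤ))) := by
    rw [zpow_neg, zpow_neg, h1]
  rw [h1, h2]

lemma exists_gconj_fin {a x : Scyc n} (h : (rotSetoid (n+2)).r a x) :
    ∃ k : Fin (n+2), x = gconj a (k : ℕ) := by
  obtain ⟨k, hk⟩ := h
  have hx : x = gconj a k := Subtype.ext hk
  have hm : (0:ℤ) < (n+2:ℤ) := by positivity
  refine ⟨⟨(k % (n+2:ℤ)).toNat, ?_⟩, ?_⟩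
  · have := Int.emod_lt_of_pos k hm
    omega
  · rw [hx, gconj_mod]
    congr 1
    simp only [Fin.val_mk]
    rw [Int.toNat_of_nonneg (Int.emod_nonneg k (by positivity))]

lemma commute_gcd {τ : Perm (Fin (n+2))} {j : ℕ}
    (h : Commute τ ((finRotate (n+2)) ^ j)) :
    Commute τ ((finRotate (n+2)) ^ (Nat.gcd j (n+2))) := by
  set σ := finRotate (n+2) with hσ
  have horder : orderOf σ = n + 2 := by rw [hσ]; exact orderOf_finRotate'
  have hm1 : σ ^ ((n+2 : ℕ) : ℤ) = 1 := by
    rw [zpow_natCast]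
    have h' := pow_orderOf_eq_one σ
    rwa [horder] at h'
  have hb : ((Nat.gcd j (n+2) : ℕ) : ℤ) = j * Nat.gcdA j (n+2) + (n+2) * Nat.gcdB j (n+2) :=
    Nat.gcd_eq_gcd_ab j (n+2)
  have hb' : ((Nat.gcd j (n+2) : ℕ) : ℤ) =
      (j:ℤ) * Nat.gcdA j (n+2) + ((n+2:ℕ):ℤ) * Nat.gcdB j (n+2) := by exact_mod_cast hb
  have hz : σ ^ (Nat.gcd j (n+2)) =
      (σ ^ j) ^ (Nat.gcdA j (n+2)) * (σ ^ ((n+2:ℕ):ℤ)) ^ (Nat.gcdB j (n+2)) := by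
    rw [← zpow_natCast σ (Nat.gcd j (n+2)), hb', zpow_add, zpow_mul, zpow_mul, zpow_natCast]
  rw [hz, hm1, one_zpow, mul_one]
  exact h.zpow_right _

lemma commute_of_gconj_eq {a : Scyc n} {k₁ k₂ : Fin (n+2)} (hlt : k₁.val < k₂.val)
    (heq : gconj a (k₁ : ℕ) = gconj a (k₂ : ℕ)) :
    Commute (a : Perm (Fin (n+2))) ((finRotate (n+2)) ^ (k₂.val - k₁.val)) := by
  set σ := finRotate (n+2) with hσ
  have hk : σ ^ (-(k₁:ℤ)) * (a : Perm (Fin (n+2))) * σ ^ ((k₁:ℤ)) =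
      σ ^ (-(k₂:ℤ)) * (a : Perm (Fin (n+2))) * σ ^ ((k₂:ℤ)) := by
    have := congrArg (fun x : Scyc n => (x : Perm (Fin (n+2)))) heq
    simpa [gconj] using this
  have key : σ ^ ((k₂:ℤ) - (k₁:ℤ)) * (a : Perm (Fin (n+2))) * (σ ^ ((k₂:ℤ) - (k₁:ℤ)))⁻¹
      = (a : Perm (Fin (n+2))) := by
    have h1 : σ ^ ((k₂:ℤ)) * (σ ^ (-(k₁:ℤ)) * (a : Perm (Fin (n+2))) * σ ^ ((k₁:ℤ))) * σ ^ (-(k₂:ℤ))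
        = σ ^ ((k₂:ℤ) - (k₁:ℤ)) * (a : Perm (Fin (n+2))) * (σ ^ ((k₂:ℤ) - (k₁:ℤ)))⁻¹ := by
      group
    have h2 : σ ^ ((k₂:ℤ)) * (σ ^ (-(k₂:ℤ)) * (a : Perm (Fin (n+2))) * σ ^ ((k₂:ℤ))) * σ ^ (-(k₂:ℤ))
        = (a : Perm (Fin (n+2))) := by
      group
    rw [← h1, hk, h2]
  have hc : Commute (a : Perm (Fin (n+2))) (σ ^ ((k₂:ℤ) - (k₁:ℤ))) := by
    rw [mul_inv_eq_iff_eq_mul] at key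
    exact Commute.symm key
  have hcast : σ ^ ((k₂:ℤ) - (k₁:ℤ)) = σ ^ (k₂.val - k₁.val) := by
    rw [← zpow_natCast σ (k₂.val - k₁.val)]
    congr 1
    omega
  rwa [hcast] at hc

lemma low_bound : Nat.factorial (n+1) ≤ cyclicOrbitCount (n+2) * (n+2) := by
  classical
  rw [← card_cycles (n := n), cyclicOrbitCount]
  rw [Nat.card_eq_fintype_card, Nat.card_eq_fintype_card]
  have key := Finset.card_le_mul_card_image
    (f := fun x : Scyc n => (Quotient.mk (rotSetoid (n+2)) x)) Finset.univ (n+2) ?_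
  · calc Fintype.card (Scyc n) = (Finset.univ : Finset (Scyc n)).card := rfl
      _ ≤ (n+2) * ((Finset.univ : Finset (Scyc n)).image
            (fun x => (Quotient.mk (rotSetoid (n+2)) x))).card := key
      _ ≤ (n+2) * Fintype.card (Quotient (rotSetoid (n+2))) := by
          exact Nat.mul_le_mul_left _ (Finset.card_le_univ _)
      _ = Fintype.card (Quotient (rotSetoid (n+2))) * (n+2) := mul_comm _ _
  · intro c hc
    obtain ⟨a, _, ha⟩ := Finset.mem_image.mp hc
    have hsub : Finset.univ.filter
        (fun x : Scyc n => Quotient.mk (rotSetoid (n+2)) x = c) ⊆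
        Finset.image (fun k : Fin (n+2) => gconj a (k : ℕ)) Finset.univ := by
      intro x hx
      have hqx : Quotient.mk (rotSetoid (n+2)) x = Quotient.mk (rotSetoid (n+2)) a := by
        rw [(Finset.mem_filter.mp hx).2, ← ha]
      have hrel : (rotSetoid (n+2)).r a x := (rotSetoid (n+2)).symm (Quotient.eq.mp hqx)
      obtain ⟨k, hk⟩ := exists_gconj_fin hrel
      exact Finset.mem_image.mpr ⟨k, Finset.mem_univ _, hk.symm⟩
    calc (Finset.univ.filter
        (fun x : Scyc n => Quotient.mk (rotSetoid (n+2)) x = c)).card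
        ≤ (Finset.image (fun k : Fin (n+2) => gconj a (k : ℕ)) Finset.univ).card :=
          Finset.card_le_card hsub
      _ ≤ (Finset.univ : Finset (Fin (n+2))).card := Finset.card_image_le
      _ = n + 2 := by simp

lemma high_bound : cyclicOrbitCount (n+2) * (n+2) ≤ Nat.factorial (n+1)
    + (n+2) * ((n+2) * (2^(n+2) * Nat.factorial ((n+2)/2))) := by
  classical
  set σ := finRotate (n+2) with hσ
  set q : Scyc n → Quotient (rotSetoid (n+2)) := fun x => Quotient.mk (rotSetoid (n+2)) x with hq
  set B : Finset (Scyc n) := Finset.univ.filter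
    (fun x : Scyc n => ∃ j, 0 < j ∧ j < n+2 ∧ Commute (x : Perm (Fin (n+2))) (σ ^ j)) with hB
  -- step 1 : orbit count bound via fibers
  have hsum1 : ∑ c : Quotient (rotSetoid (n+2)),
      (Finset.univ.filter (fun x : Scyc n => q x = c)).card = Fintype.card (Scyc n) :=
    (Finset.card_eq_sum_card_fiberwise (fun x _ => Finset.mem_univ (q x))).symm
  have hsum2 : ∑ c : Quotient (rotSetoid (n+2)),
      (B.filter (fun x : Scyc n => q x = c)).card = B.card :=
    (Finset.card_eq_sum_card_fiberwise (fun x _ => Finset.mem_univ (q x))).symm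
  have key : ∀ c : Quotient (rotSetoid (n+2)), (n+2) ≤
      (Finset.univ.filter (fun x : Scyc n => q x = c)).card
        + (n+2) * (B.filter (fun x : Scyc n => q x = c)).card := by
    intro c
    set a : Scyc n := Quotient.out c with haout
    have ha : q a = c := Quotient.out_eq c
    by_cases hBa : a ∈ B
    · have hpos : 0 < (B.filter (fun x : Scyc n => q x = c)).card := by
        apply Finset.card_pos.mpr
        exact ⟨a, Finset.mem_filter.mpr ⟨hBa, ha⟩⟩
      have : (n+2) ≤ (n+2) * (B.filter (fun x : Scyc n => q x = c)).card :=
        Nat.le_mul_of_pos_right _ hpos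
      omega
    · -- the orbit map is injective
      have hinj : Function.Injective (fun k : Fin (n+2) => gconj a (k : ℕ)) := by
        intro k₁ k₂ hk
        by_contra hne
        have hne' : k₁.val ≠ k₂.val := fun h => hne (Fin.ext h)
        have hcomm : ∃ j, 0 < j ∧ j < n+2 ∧ Commute (a : Perm (Fin (n+2))) (σ ^ j) := by
          rcases Nat.lt_or_ge k₁.val k₂.val with hlt | hge
          · exact ⟨k₂.val - k₁.val, by omega, by omega, commute_of_gconj_eq hlt hk⟩
          · have hlt : k₂.val < k₁.val := by omega
            exact ⟨k₁.val - k₂.val, by omega, by omega, commute_of_gconj_eq hlt hk.symm⟩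
        exact hBa (Finset.mem_filter.mpr ⟨Finset.mem_univ _, hcomm⟩)
      have hsub : Finset.image (fun k : Fin (n+2) => gconj a (k : ℕ)) Finset.univ ⊆
          Finset.univ.filter (fun x : Scyc n => q x = c) := by
        intro x hx
        obtain ⟨k, _, hk⟩ := Finset.mem_image.mp hx
        refine Finset.mem_filter.mpr ⟨Finset.mem_univ _, ?_⟩
        rw [← hk, ← ha]
        exact Quotient.sound ((rotSetoid (n+2)).symm (gconj_rel a (k : ℕ)))
      have hcard : (n+2) ≤ (Finset.univ.filter (fun x : Scyc n => q x = c)).card := by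
        calc (n+2) = (Finset.univ : Finset (Fin (n+2))).card := by simp
          _ = (Finset.image (fun k : Fin (n+2) => gconj a (k : ℕ)) Finset.univ).card :=
              (Finset.card_image_of_injective _ hinj).symm
          _ ≤ _ := Finset.card_le_card hsub
      omega
  -- combine the fiberwise bounds
  have step1 : cyclicOrbitCount (n+2) * (n+2) ≤ Fintype.card (Scyc n) + (n+2) * B.card := by
    rw [cyclicOrbitCount, Nat.card_eq_fintype_card]
    calc Fintype.card (Quotient (rotSetoid (n+2))) * (n+2)
        = ∑ _c : Quotient (rotSetoid (n+2)), (n+2) := by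
          rw [Finset.sum_const, Finset.card_univ, smul_eq_mul]
      _ ≤ ∑ c : Quotient (rotSetoid (n+2)),
            ((Finset.univ.filter (fun x : Scyc n => q x = c)).card
              + (n+2) * (B.filter (fun x : Scyc n => q x = c)).card) :=
          Finset.sum_le_sum (fun c _ => key c)
      _ = Fintype.card (Scyc n) + (n+2) * B.card := by
          rw [Finset.sum_add_distrib, hsum1, ← Finset.mul_sum, hsum2]
  -- step 2 : bound on B
  have step2 : B.card ≤ (n+2) * (2^(n+2) * Nat.factorial ((n+2)/2)) := by
    have hsub : B ⊆ (Finset.Ico 1 (n+2)).biUnion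
        (fun j => Finset.univ.filter (fun x : Scyc n => Commute (x : Perm (Fin (n+2))) (σ ^ j))) := by
      intro x hx
      obtain ⟨j, hj0, hjm, hcj⟩ := (Finset.mem_filter.mp hx).2
      exact Finset.mem_biUnion.mpr ⟨j, Finset.mem_Ico.mpr ⟨hj0, hjm⟩,
        Finset.mem_filter.mpr ⟨Finset.mem_univ _, hcj⟩⟩
    have hper : ∀ j ∈ Finset.Ico 1 (n+2),
        (Finset.univ.filter (fun x : Scyc n => Commute (x : Perm (Fin (n+2))) (σ ^ j))).card
          ≤ 2^(n+2) * Nat.factorial ((n+2)/2) := by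
      intro j hj
      obtain ⟨hj1, hj2⟩ := Finset.mem_Ico.mp hj
      set d := Nat.gcd j (n+2) with hd
      have hd0 : 0 < d := Nat.gcd_pos_of_pos_left _ hj1
      have hdvd : d ∣ n + 2 := Nat.gcd_dvd_right _ _
      have hdlt : d < n + 2 := lt_of_le_of_lt (Nat.le_of_dvd hj1 (Nat.gcd_dvd_left _ _)) hj2
      have hinj2 : Function.Injective
          (fun x : {x : Scyc n // Commute (x : Perm (Fin (n+2))) (σ ^ j)} =>
            (⟨(x : Scyc n), commute_gcd x.2⟩ :
              {τ : Perm (Fin (n+2)) // Commute τ (σ ^ d)})) := by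
        intro x y hxy
        have h' : ((x : Scyc n) : Perm (Fin (n+2))) = ((y : Scyc n) : Perm (Fin (n+2))) := by
          simpa using congrArg Subtype.val hxy
        exact Subtype.ext (Subtype.ext h')
      calc (Finset.univ.filter
            (fun x : Scyc n => Commute (x : Perm (Fin (n+2))) (σ ^ j))).card
          = Nat.card {x : Scyc n // Commute (x : Perm (Fin (n+2))) (σ ^ j)} := by
            rw [Nat.card_eq_fintype_card, Fintype.card_subtype]
        _ ≤ Nat.card {τ : Perm (Fin (n+2)) // Commute τ (σ ^ d)} :=
            Nat.card_le_card_of_injective _ hinj2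
        _ ≤ ((n+2)/d) ^ d * Nat.factorial d := card_commute_le (n := n+1) hd0 hdvd
        _ ≤ 2^(n+2) * Nat.factorial ((n+2)/2) := by
            have h1 : ((n+2)/d) ^ d ≤ 2^(n+2) := by
              calc ((n+2)/d) ^ d ≤ (2 ^ ((n+2)/d)) ^ d :=
                  Nat.pow_le_pow_left (le_of_lt (Nat.lt_two_pow_self)) d
                _ = 2 ^ ((n+2)/d * d) := by rw [← pow_mul]
                _ = 2 ^ (n+2) := by rw [Nat.div_mul_cancel hdvd]
            have h2 : Nat.factorial d ≤ Nat.factorial ((n+2)/2) := by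
              apply Nat.factorial_le
              obtain ⟨t, ht⟩ := hdvd
              have ht2 : 2 ≤ t := by
                rcases Nat.lt_or_ge t 2 with h | h
                · interval_cases t <;> omega
                · exact h
              rw [Nat.le_div_iff_mul_le (by norm_num)]
              calc d * 2 ≤ d * t := Nat.mul_le_mul_left d ht2
                _ = n + 2 := ht.symm
            exact Nat.mul_le_mul h1 h2
    calc B.card ≤ ((Finset.Ico 1 (n+2)).biUnion
          (fun j => Finset.univ.filter
            (fun x : Scyc n => Commute (x : Perm (Fin (n+2))) (σ ^ j)))).card :=
        Finset.card_le_card hsub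
      _ ≤ ∑ j ∈ Finset.Ico 1 (n+2), (Finset.univ.filter
            (fun x : Scyc n => Commute (x : Perm (Fin (n+2))) (σ ^ j))).card :=
        Finset.card_biUnion_le
      _ ≤ ∑ _j ∈ Finset.Ico 1 (n+2), 2^(n+2) * Nat.factorial ((n+2)/2) :=
        Finset.sum_le_sum hper
      _ = (n+1) * (2^(n+2) * Nat.factorial ((n+2)/2)) := by
        rw [Finset.sum_const, Nat.card_Ico, smul_eq_mul]
        congr 1
      _ ≤ (n+2) * (2^(n+2) * Nat.factorial ((n+2)/2)) := by
        apply Nat.mul_le_mul_right; omega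
  calc cyclicOrbitCount (n+2) * (n+2) ≤ Fintype.card (Scyc n) + (n+2) * B.card := step1
    _ ≤ Nat.factorial (n+1) + (n+2) * ((n+2) * (2^(n+2) * Nat.factorial ((n+2)/2))) := by
      have hcS : Fintype.card (Scyc n) = Nat.factorial (n+1) := by
        rw [← Nat.card_eq_fintype_card]; exact card_cycles
      rw [hcS]
      exact Nat.add_le_add_left (Nat.mul_le_mul_left _ step2) _

lemma fact_mul_pow_le (k t : ℕ) : k.factorial * (k+1)^t ≤ (k + t).factorial := by
  induction t with
  | zero => simp
  | succ t ih =>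
    calc k.factorial * (k+1)^(t+1) = (k.factorial * (k+1)^t) * (k+1) := by ring
      _ ≤ (k + t).factorial * (k+1) := Nat.mul_le_mul_right _ ih
      _ ≤ (k + t).factorial * (k + t + 1) := Nat.mul_le_mul_left _ (by omega)
      _ = (k + t + 1) * (k + t).factorial := by ring
      _ = (k + (t+1)).factorial := (Nat.factorial_succ (k+t)).symm

lemma fact_le_pow' (h : ℕ) : h.factorial ≤ (h+1)^(h-1) := by
  induction h with
  | zero => simp
  | succ h ih =>
    rcases Nat.eq_zero_or_pos h with rfl | hpos
    · simp
    calc (h+1).factorial = (h+1) * h.factorial := Nat.factorial_succ h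
      _ ≤ (h+1) * (h+1)^(h-1) := Nat.mul_le_mul_left _ ih
      _ = (h+1)^(h-1+1) := by rw [pow_succ]; ring
      _ = (h+1)^h := by congr 1; omega
      _ ≤ (h+2)^h := Nat.pow_le_pow_left (by omega) _
      _ = (h+1+1)^(h+1-1) := rfl

lemma sq_le_pow {h : ℕ} (hh : 14 ≤ h) : (2*h+1)^2 ≤ 2^(h-4) := by
  induction h with
  | zero => omega
  | succ h ih =>
    rcases Nat.lt_or_ge h 14 with hlt | hge
    · have h13 : h = 13 := by omega
      subst h13
      norm_num
    · have ih' := ih hge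
      have hstep : (2*(h+1)+1)^2 ≤ 2 * (2*h+1)^2 := by nlinarith
      calc (2*(h+1)+1)^2 ≤ 2 * (2*h+1)^2 := hstep
        _ ≤ 2 * 2^(h-4) := Nat.mul_le_mul_left _ ih'
        _ = 2^(h-4+1) := by rw [pow_succ]; ring
        _ = 2^(h+1-4) := by congr 1; omega

lemma main_nat {m : ℕ} (hm : 28 ≤ m) :
    m^2 * 2^m * ((m/2).factorial) * ((m/2).factorial) ≤ 8^(m/2) * (m-1).factorial := by
  set h := m / 2 with hh
  have hh14 : 14 ≤ h := by omega
  have hm2h : m ≤ 2*h + 1 := by omega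
  have hfac1 : h.factorial * (h+1)^(h-1) ≤ (m-1).factorial := by
    calc h.factorial * (h+1)^(h-1) ≤ h.factorial * (h+1)^(m-1-h) := by
          apply Nat.mul_le_mul_left
          apply Nat.pow_le_pow_right (by omega)
          omega
      _ ≤ (h + (m-1-h)).factorial := fact_mul_pow_le _ _
      _ = (m-1).factorial := by congr 1; omega
  have hkey : m^2 * 2^m ≤ 8^h := by
    calc m^2 * 2^m ≤ (2*h+1)^2 * 2^(2*h+1) := by
          apply Nat.mul_le_mul (Nat.pow_le_pow_left hm2h 2) (Nat.pow_le_pow_right (by norm_num) hm2h)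
      _ ≤ 2^(h-4) * 2^(2*h+1) := Nat.mul_le_mul_right _ (sq_le_pow hh14)
      _ = 2^(h-4+(2*h+1)) := by rw [← pow_add]
      _ ≤ 2^(3*h) := Nat.pow_le_pow_right (by norm_num) (by omega)
      _ = 8^h := by rw [show (8:ℕ) = 2^3 by norm_num, ← pow_mul]
  calc m^2 * 2^m * ((m/2).factorial) * ((m/2).factorial)
      = (m^2 * 2^m) * (h.factorial * h.factorial) := by rw [← hh]; ring
    _ ≤ 8^h * ((h+1)^(h-1) * h.factorial) := by
        apply Nat.mul_le_mul hkey
        exact Nat.mul_le_mul_right _ (fact_le_pow' h)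
    _ = 8^h * (h.factorial * (h+1)^(h-1)) := by ring
    _ ≤ 8^h * (m-1).factorial := Nat.mul_le_mul_left _ hfac1

noncomputable def errf (m : ℕ) : ℝ :=
  (m:ℝ)^2 * 2^m * ((m/2).factorial : ℝ) / ((m-1).factorial : ℝ)

lemma errf_nonneg (m : ℕ) : 0 ≤ errf m := by
  unfold errf; positivity

lemma errf_le (m : ℕ) (hm : 28 ≤ m) : errf m ≤ (8:ℝ)^(m/2) / ((m/2).factorial : ℝ) := by
  unfold errf
  rw [div_le_div_iff₀ (by positivity) (by positivity)]
  have := main_nat hm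
  have hr : ((m:ℝ)^2 * 2^m * ((m/2).factorial : ℝ)) * ((m/2).factorial : ℝ)
      ≤ (8:ℝ)^(m/2) * ((m-1).factorial : ℝ) := by
    exact_mod_cast this
  linarith [hr]

lemma errf_tendsto : Filter.Tendsto errf Filter.atTop (nhds 0) := by
  have hdiv : Filter.Tendsto (fun m : ℕ => m / 2) Filter.atTop Filter.atTop := by
    apply Filter.tendsto_atTop_atTop.mpr
    intro b
    exact ⟨2*b, fun a ha => by omega⟩
  have h8 : Filter.Tendsto (fun h : ℕ => (8:ℝ)^h / (h.factorial : ℝ))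
      Filter.atTop (nhds 0) := FloorSemiring.tendsto_pow_div_factorial_atTop 8
  have hcomp := h8.comp hdiv
  apply squeeze_zero' (Filter.Eventually.of_forall errf_nonneg) ?_ hcomp
  filter_upwards [Filter.eventually_ge_atTop 28] with m hm
  exact errf_le m hm

theorem cyclicOrbitCount_asymptotic_aux :
    Filter.Tendsto
      (fun m : ℕ => ((cyclicOrbitCount m * m : ℕ) : ℝ) / (Nat.factorial (m - 1) : ℝ))
      Filter.atTop (nhds 1) := by
  have hupper : Filter.Tendsto (fun m : ℕ => 1 + errf m) Filter.atTop (nhds 1) := by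
    have h1 : Filter.Tendsto (fun _ : ℕ => (1:ℝ)) Filter.atTop (nhds 1) := tendsto_const_nhds
    simpa using h1.add errf_tendsto
  apply tendsto_of_tendsto_of_tendsto_of_le_of_le' tendsto_const_nhds hupper
  · filter_upwards [Filter.eventually_ge_atTop 2] with m hm
    obtain ⟨n, rfl⟩ : ∃ n, m = n + 2 := ⟨m - 2, by omega⟩
    have hlow := low_bound (n := n)
    have hfpos : (0:ℝ) < ((n+2-1).factorial : ℝ) := by positivity
    rw [le_div_iff₀ hfpos]
    have : ((n+1).factorial : ℝ) ≤ ((cyclicOrbitCount (n+2) * (n+2) : ℕ) : ℝ) := by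
      exact_mod_cast hlow
    simpa [show n+2-1 = n+1 by omega] using this
  · filter_upwards [Filter.eventually_ge_atTop 2] with m hm
    obtain ⟨n, rfl⟩ : ∃ n, m = n + 2 := ⟨m - 2, by omega⟩
    have hhigh := high_bound (n := n)
    have hfpos : (0:ℝ) < ((n+2-1).factorial : ℝ) := by positivity
    rw [div_le_iff₀ hfpos]
    have hcast : ((cyclicOrbitCount (n+2) * (n+2) : ℕ) : ℝ) ≤ ((n+1).factorial : ℝ)
        + ((n+2):ℝ) * (((n+2):ℝ) * (2^(n+2) * (((n+2)/2).factorial : ℝ))) := by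
      exact_mod_cast hhigh
    have herr : (1 + errf (n+2)) * ((n+2-1).factorial : ℝ)
        = ((n+1).factorial : ℝ) + ((n+2):ℝ)^2 * 2^(n+2) * (((n+2)/2).factorial : ℝ) := by
      unfold errf
      have h21 : ((n+2-1).factorial : ℝ) = ((n+1).factorial : ℝ) := by norm_num
      have h21' : ((n+2-1).factorial : ℝ) ≠ 0 := by positivity
      rw [h21] at h21' ⊢
      field_simp
      push_cast
      ring
    rw [herr]
    calc ((cyclicOrbitCount (n+2) * (n+2) : ℕ) : ℝ)
        ≤ ((n+1).factorial : ℝ) + ((n+2):ℝ) * (((n+2):ℝ) * (2^(n+2) * (((n+2)/2).factorial : ℝ))) := hcast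
      _ = ((n+1).factorial : ℝ) + ((n+2):ℝ)^2 * 2^(n+2) * (((n+2)/2).factorial : ℝ) := by ring


end CyclicOrbitAux

/-- The lower bound `(m−1)!/m ≤ d_m` is asymptotically sharp:
`d_m · m / (m−1)! → 1` as `m → ∞`. -/
theorem cyclicOrbitCount_asymptotic :
    Filter.Tendsto
      (fun m : ℕ => ((cyclicOrbitCount m * m : ℕ) : ℝ) / (Nat.factorial (m - 1) : ℝ))
      Filter.atTop (nhds 1) :=
  cyclicOrbitCount_asymptotic_aux
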